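/- Let f(X) = a₀X⁴ + 4a₁X³ + 6a₂X² + 4a₃X + a₄ be a real quartic polynomial. Let x, y be real numbers with x ≠ y, f(x) ≥ 0 and f(y) ≥ 0. Define w = (F₁(x,y) + √(f(x)·f(y)))/(2(x−y)²) where F₁(x,y) = f(y) + (1/2)f'(y)(x−y) + (1/12)f''(y)(x−y)², and A = (f(x)/(x−y)³ − f'(x)/(4(x−y)²))·√(f(y)) + (f(y)/(x−y)³ + f'(y)/(4(x−y)²))·√(f(x)). If the denominator D = 2·(w − f''(y)/24)² − (1/48)·f(y)·f⁽⁴⁾(y) is nonzero, then x − y = (√(f(y))·A + (1/2)f'(y)·(w − f''(y)/24) + (1/24)f(y)f'''(y)) / D. -/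

import Mathlib

set_option maxHeartbeats 2000000 in
set_option maxRecDepth 100000 in


/-- The algebraic inversion step of the Biermann–Weierstrass theorem: solving the
quadratic relation between `w` and `x − y` for `x`. -/
theorem biermann_weierstrass_inversion
    (a₀ a₁ a₂ a₃ a₄ : ℝ)
    (f f' f'' f''' f'''' : ℝ → ℝ)
    (hf : f = fun X => a₀ * X ^ 4 + 4 * a₁ * X ^ 3 + 6 * a₂ * X ^ 2 + 4 * a₃ * X + a₄)
    (hf' : f' = fun X => 4 * a₀ * X ^ 3 + 12 * a₁ * X ^ 2 + 12 * a₂ * X + 4 * a₃)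
    (hf'' : f'' = fun X => 12 * a₀ * X ^ 2 + 24 * a₁ * X + 12 * a₂)
    (hf''' : f''' = fun X => 24 * a₀ * X + 24 * a₁)
    (hf'''' : f'''' = fun _ => 24 * a₀)
    (x y : ℝ) (hxy : x ≠ y) (hfx : 0 ≤ f x) (hfy : 0 ≤ f y)
    (F₁ w A D : ℝ)
    (hF₁ : F₁ = f y + (1 / 2) * f' y * (x - y) + (1 / 12) * f'' y * (x - y) ^ 2)
    (hw : w = (F₁ + Real.sqrt (f x * f y)) / (2 * (x - y) ^ 2))
    (hA : A = (f x / (x - y) ^ 3 - f' x / (4 * (x - y) ^ 2)) * Real.sqrt (f y)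
        + (f y / (x - y) ^ 3 + f' y / (4 * (x - y) ^ 2)) * Real.sqrt (f x))
    (hD : D = 2 * (w - f'' y / 24) ^ 2 - (1 / 48) * f y * f'''' y)
    (hDne : D ≠ 0) :
    x - y = (Real.sqrt (f y) * A + (1 / 2) * f' y * (w - f'' y / 24)
        + (1 / 24) * f y * f''' y) / D := by
  have hs : x - y ≠ 0 := sub_ne_zero.mpr hxy
  set u := Real.sqrt (f x) with hu0
  set v := Real.sqrt (f y) with hv0
  have hu : u ^ 2 = f x := Real.sq_sqrt hfx
  have hv : v ^ 2 = f y := Real.sq_sqrt hfy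
  have huv : Real.sqrt (f x * f y) = u * v := Real.sqrt_mul hfx _
  rw [eq_div_iff hDne]
  subst hD hA hw hF₁
  rw [huv]
  rw [hf] at hu hv
  simp only at hu hv
  simp only [hf, hf', hf'', hf''', hf'''']
  field_simp
  linear_combination ((4 * 48 * 576 ^ 2 : ℝ) * v ^ 2) * hu + ((4 * 48 * 576 ^ 2 : ℝ) * (a₀ * x ^ 4 + 4 * a₁ * x ^ 3 + 6 * a₂ * x ^ 2 + 4 * a₃ * x + a₄) - 12 * 24 * 48 * 8 * 12 * 24 * (4 * (a₀ * x ^ 4 + 4 * a₁ * x ^ 3 + 6 * a₂ * x ^ 2 + 4 * a₃ * x + a₄) - (x - y) * (4 * a₀ * x ^ 3 + 12 * a₁ * x ^ 2 + 12 * a₂ * x + 4 * a₃))) * hv
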